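/- arXiv:2603.24493 — 6 statements merged into one kernel-verified Lean document; each statement's English description precedes it below -/
import Mathlib

section
/- Let P = ∑_{t=1}^k λ_t μ^(t), where each μ^(t) = μ^(t)_1 ⊗ ⋯ ⊗ μ^(t)_d is a product probability measure on X = W₁ × ⋯ × W_d, λ_t ≥ 0, and ∑_t λ_t = 1. Let P_□ = P₁ ⊗ ⋯ ⊗ P_d be the product of the marginals of P. Then for every measurable set E ⊆ X, P_□(E) ≥ P(E)^d / (k − 1 + P(E))^{d−1}. -/
open MeasureTheory ENNReal Finset

lemma holder_nnreal {k d : ℕ} (hd : 1 ≤ d) (l a : Fin k → NNReal) :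
    (∑ t, l t * a t) ^ d ≤ (∑ t, l t ^ d * a t) * (∑ t, a t) ^ (d - 1) := by
  rcases eq_or_lt_of_le hd with h1 | h2
  · simp [← h1]
  · have hd0 : (d : ℝ) ≠ 0 := by positivity
    have hd1 : (d : ℝ) - 1 ≠ 0 := by
      have : (2:ℝ) ≤ d := by exact_mod_cast h2
      linarith
    have hpq : (d : ℝ).HolderConjugate ((d:ℝ) / ((d:ℝ) - 1)) :=
      Real.HolderConjugate.conjExponent (by exact_mod_cast h2)
    set F : Fin k → NNReal := fun t => l t * a t ^ (1 / (d:ℝ))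
    set G : Fin k → NNReal := fun t => a t ^ (((d:ℝ) - 1) / d)
    have hFG : ∀ t, l t * a t = F t * G t := by
      intro t
      have he : 1 / (d:ℝ) + ((d:ℝ) - 1) / d = 1 := by field_simp; ring
      have : a t ^ (1 / (d:ℝ)) * a t ^ (((d:ℝ) - 1) / d) = a t := by
        rw [← NNReal.rpow_add' (by rw [he]; norm_num) (a t), he, NNReal.rpow_one]
      show l t * a t = l t * a t ^ (1 / (d:ℝ)) * a t ^ (((d:ℝ) - 1) / d)
      rw [mul_assoc, this]
    have key := NNReal.inner_le_Lp_mul_Lq Finset.univ F G hpq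
    have hF : ∀ t, F t ^ (d:ℝ) = l t ^ d * a t := by
      intro t
      rw [NNReal.mul_rpow, ← NNReal.rpow_natCast (l t) d, ← NNReal.rpow_mul]
      norm_num [hd0]
    have hG : ∀ t, G t ^ ((d:ℝ) / ((d:ℝ) - 1)) = a t := by
      intro t
      rw [← NNReal.rpow_mul]
      field_simp
      exact NNReal.rpow_one _
    simp only [hF, hG] at key
    rw [← funext hFG] at key
    calc (∑ t, l t * a t) ^ d
        ≤ ((∑ t, l t ^ d * a t) ^ (1/(d:ℝ)) *
            (∑ t, a t) ^ (1/((d:ℝ)/((d:ℝ)-1)))) ^ d := pow_le_pow_left₀ zero_le key d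
      _ = (∑ t, l t ^ d * a t) * (∑ t, a t) ^ (d - 1) := by
          have e1 : (1/(d:ℝ)) * d = 1 := by field_simp
          have e2 : (1/((d:ℝ)/((d:ℝ)-1))) * d = ((d-1 : ℕ) : ℝ) := by
            rw [Nat.cast_sub hd]; push_cast; field_simp
          rw [mul_pow, ← NNReal.rpow_natCast ((∑ t, l t ^ d * a t) ^ (1/(d:ℝ))) d,
            ← NNReal.rpow_natCast ((∑ t, a t) ^ (1/((d:ℝ)/((d:ℝ)-1)))) d,
            ← NNReal.rpow_mul, ← NNReal.rpow_mul, e1, e2, NNReal.rpow_one,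
            NNReal.rpow_natCast]


open MeasureTheory ENNReal Finset

lemma holder_scalar {k d : ℕ} (hd : 1 ≤ d) (l a : Fin k → ℝ) (hl : ∀ t, 0 ≤ l t)
    (hls : ∑ t, l t = 1) (ha0 : ∀ t, 0 ≤ a t) (ha1 : ∀ t, a t ≤ 1) :
    (∑ t, l t * a t) ^ d / ((k:ℝ) - 1 + ∑ t, l t * a t) ^ (d-1) ≤ ∑ t, l t ^ d * a t := by
  have hk : 1 ≤ k := by
    rcases Nat.eq_zero_or_pos k with h | h
    · subst h; simp at hls
    · exact h
  set p := ∑ t, l t * a t with hp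
  have hp0 : 0 ≤ p := Finset.sum_nonneg fun t _ => mul_nonneg (hl t) (ha0 t)
  have hS0 : 0 ≤ ∑ t, l t ^ d * a t :=
    Finset.sum_nonneg fun t _ => mul_nonneg (pow_nonneg (hl t) d) (ha0 t)
  have hlle : ∀ t, l t ≤ 1 := by
    intro t
    rw [← hls]
    exact Finset.single_le_sum (fun s _ => hl s) (Finset.mem_univ t)
  have hT : ∑ t, a t ≤ (k:ℝ) - 1 + p := by
    have h1 : ∑ t, a t = p + ∑ t, (1 - l t) * a t := by
      rw [hp, ← Finset.sum_add_distrib]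
      congr 1; funext t; ring
    have h2 : ∑ t, (1 - l t) * a t ≤ ∑ t, (1 - l t) :=
      Finset.sum_le_sum fun t _ =>
        mul_le_of_le_one_right (by linarith [hlle t]) (ha1 t)
    have h3 : ∑ t, (1 - l t) = (k:ℝ) - 1 := by
      rw [Finset.sum_sub_distrib, hls, Finset.sum_const, Finset.card_univ,
        Fintype.card_fin]
      simp
    linarith
  have hT0 : 0 ≤ ∑ t, a t := Finset.sum_nonneg fun t _ => ha0 t
  have hHold : p ^ d ≤ (∑ t, l t ^ d * a t) * (∑ t, a t) ^ (d - 1) := by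
    set L : Fin k → NNReal := fun t => (l t).toNNReal
    set A : Fin k → NNReal := fun t => (a t).toNNReal
    have key := holder_nnreal hd L A
    have key' : ((∑ t, L t * A t : NNReal) : ℝ) ^ d ≤
        ((∑ t, L t ^ d * A t : NNReal) : ℝ) * ((∑ t, A t : NNReal) : ℝ) ^ (d - 1) := by
      exact_mod_cast key
    have hl' : ∀ t, ((L t : ℝ)) = l t := fun t => Real.coe_toNNReal _ (hl t)
    have ha' : ∀ t, ((A t : ℝ)) = a t := fun t => Real.coe_toNNReal _ (ha0 t)
    simpa only [NNReal.coe_sum, NNReal.coe_mul, NNReal.coe_pow, hl', ha'] using key'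
  have hD0 : 0 ≤ (k:ℝ) - 1 + p := by
    have : (1:ℝ) ≤ (k:ℝ) := by exact_mod_cast hk
    linarith
  have hTD : (∑ t, a t) ^ (d - 1) ≤ ((k:ℝ) - 1 + p) ^ (d - 1) :=
    pow_le_pow_left₀ hT0 hT _
  have hmain : p ^ d ≤ (∑ t, l t ^ d * a t) * ((k:ℝ) - 1 + p) ^ (d - 1) :=
    hHold.trans (mul_le_mul_of_nonneg_left hTD hS0)
  rcases eq_or_lt_of_le hD0 with h0 | h0
  · have hpz : p = 0 := by
      have : p ≤ (k:ℝ) - 1 + p := by linarith [sub_nonneg.2 (show (1:ℝ) ≤ k by exact_mod_cast hk)]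
      nlinarith
    rw [hpz, zero_pow (by omega : d ≠ 0), zero_div]
    exact hS0
  · rw [div_le_iff₀ (by positivity)]
    exact hmain
/-- If `P` is a mixture of at most `k` product distributions on
`X = W₁ × ⋯ × W_d`, and `P_□` is the product of its marginals, then for every
measurable `E`, `P_□(E) ≥ P(E)^d / (k − 1 + P(E))^{d−1}`. -/
theorem mixture_box_continuity {d k : ℕ} (hd : 1 ≤ d)
    {W : Fin d → Type*} [∀ i, MeasurableSpace (W i)]
    (lam : Fin k → ℝ≥0∞) (hsum : ∑ t, lam t = 1)
    (μ : ∀ t : Fin k, ∀ i, Measure (W i))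
    (hprob : ∀ t i, IsProbabilityMeasure (μ t i))
    (E : Set (∀ i, W i)) (hE : MeasurableSet E) :
    ((∑ t, lam t • Measure.pi (μ t) : Measure (∀ i, W i)) E).toReal ^ d /
        ((k : ℝ) - 1 +
          ((∑ t, lam t • Measure.pi (μ t) : Measure (∀ i, W i)) E).toReal) ^ (d - 1)
      ≤ ((Measure.pi (fun i => ∑ t, lam t • μ t i) : Measure (∀ i, W i)) E).toReal := by
  haveI : ∀ (t : Fin k) (i : Fin d), IsProbabilityMeasure (μ t i) := hprob
  haveI : ∀ (t : Fin k) (i : Fin d), SigmaFinite (μ t i) := fun t i => by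
    haveI := hprob t i; infer_instance
  have hlam1 : ∀ t, lam t ≤ 1 := fun t => by
    rw [← hsum]; exact Finset.single_le_sum (fun s _ => zero_le) (Finset.mem_univ t)
  have hlamtop : ∀ t, lam t ≠ ∞ := fun t => ne_top_of_le_ne_top one_ne_top (hlam1 t)
  have hfin : ∀ (t : Fin k) (i : Fin d), IsFiniteMeasure (lam t • μ t i) := by
    intro t i
    constructor
    rw [Measure.smul_apply, smul_eq_mul, measure_univ, mul_one]
    exact lt_of_le_of_lt (hlam1 t) one_lt_top
  haveI hprobν : ∀ i, IsProbabilityMeasure (∑ t, lam t • μ t i) := by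
    intro i
    constructor
    rw [Measure.finset_sum_apply]
    simp [measure_univ, hsum]
  have hfinν : ∀ i, IsFiniteMeasure (∑ t, lam t • μ t i) := fun i =>
    ⟨by rw [(hprobν i).measure_univ]; exact one_lt_top⟩
  haveI : ∀ i, SigmaFinite (∑ t, lam t • μ t i) := fun i =>
    @IsFiniteMeasure.toSigmaFinite _ _ _ (hfinν i)
  -- expansion of the product of mixtures
  have hexp : (Measure.pi (fun i => ∑ t, lam t • μ t i) : Measure (∀ i, W i)) =
      ∑ f : Fin d → Fin k, Measure.pi (fun i => lam (f i) • μ (f i) i) := by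
    have hbox : ∀ s : ∀ i, Set (W i), (∀ i, MeasurableSet (s i)) →
        (∑ f : Fin d → Fin k, (Measure.pi (fun i => lam (f i) • μ (f i) i) :
          Measure (∀ i, W i))) (Set.pi Set.univ s)
          = ∏ i, (∑ t, lam t • μ t i) (s i) := by
      intro s hs
      haveI : ∀ (f : Fin d → Fin k) (i : Fin d), SigmaFinite (lam (f i) • μ (f i) i) :=
        fun f i => @IsFiniteMeasure.toSigmaFinite _ _ _ (hfin (f i) i)
      rw [Measure.finset_sum_apply]
      simp_rw [Measure.pi_pi, Measure.finset_sum_apply]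
      rw [Finset.prod_univ_sum]
      simp [Fintype.piFinset_univ]
    exact Measure.pi_eq hbox
  -- each constant-index product is a scaled product measure
  have hconst : ∀ t : Fin k, (Measure.pi (fun i => lam t • μ t i) : Measure (∀ i, W i)) =
      lam t ^ d • Measure.pi (μ t) := by
    intro t
    haveI : ∀ (i : Fin d), SigmaFinite (lam t • μ t i) :=
      fun i => @IsFiniteMeasure.toSigmaFinite _ _ _ (hfin t i)
    refine Measure.pi_eq fun s hs => ?_
    rw [Measure.smul_apply, Measure.pi_pi, smul_eq_mul]
    simp_rw [Measure.smul_apply, smul_eq_mul]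
    rw [Finset.prod_mul_distrib, Finset.prod_const, Finset.card_univ, Fintype.card_fin]
  -- the diagonal lower bound
  have hdiag : (∑ t, lam t ^ d * Measure.pi (μ t) E)
      ≤ (Measure.pi (fun i => ∑ t, lam t • μ t i) : Measure (∀ i, W i)) E := by
    rw [hexp, Measure.finset_sum_apply]
    haveI : Nonempty (Fin d) := ⟨⟨0, hd⟩⟩
    have hinj : Function.Injective (fun t : Fin k => (Function.const (Fin d) t)) :=
      fun s t h => congrFun h (Classical.arbitrary _)
    calc (∑ t, lam t ^ d * Measure.pi (μ t) E)
        = ∑ t, (Measure.pi (fun i => lam t • μ t i) : Measure (∀ i, W i)) E := by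
          refine Finset.sum_congr rfl fun t _ => ?_
          rw [hconst t, Measure.smul_apply, smul_eq_mul]
      _ = ∑ f ∈ Finset.univ.image (fun t : Fin k => Function.const (Fin d) t),
            (Measure.pi (fun i => lam (f i) • μ (f i) i) : Measure (∀ i, W i)) E := by
          rw [Finset.sum_image (fun s _ t _ h => hinj h)]
          rfl
      _ ≤ ∑ f : Fin d → Fin k,
            (Measure.pi (fun i => lam (f i) • μ (f i) i) : Measure (∀ i, W i)) E :=
          Finset.sum_le_sum_of_subset (Finset.subset_univ _)
  -- pass to real numbers
  haveI : IsProbabilityMeasure (Measure.pi (fun i => ∑ t, lam t • μ t i)) :=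
    inferInstance
  have hνtop : (Measure.pi (fun i => ∑ t, lam t • μ t i) : Measure (∀ i, W i)) E ≠ ∞ :=
    measure_ne_top _ _
  have hPE : ((∑ t, lam t • Measure.pi (μ t) : Measure (∀ i, W i)) E)
      = ∑ t, lam t * Measure.pi (μ t) E := by
    rw [Measure.finset_sum_apply]
    simp [Measure.smul_apply, smul_eq_mul]
  set a : Fin k → ℝ := fun t => ((Measure.pi (μ t) : Measure (∀ i, W i)) E).toReal with ha
  set l : Fin k → ℝ := fun t => (lam t).toReal with hl
  haveI hpp : ∀ t, IsProbabilityMeasure ((Measure.pi (μ t) : Measure (∀ i, W i))) := fun t =>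
    inferInstance
  have hmtop : ∀ t, (Measure.pi (μ t) : Measure (∀ i, W i)) E ≠ ∞ := fun t => by
    haveI : IsFiniteMeasure ((Measure.pi (μ t) : Measure (∀ i, W i))) :=
      ⟨by rw [(hpp t).measure_univ]; exact one_lt_top⟩
    exact measure_ne_top _ _
  have hPEr : ((∑ t, lam t • Measure.pi (μ t) : Measure (∀ i, W i)) E).toReal
      = ∑ t, l t * a t := by
    rw [hPE, ENNReal.toReal_sum fun t _ => ENNReal.mul_ne_top (hlamtop t) (hmtop t)]
    exact Finset.sum_congr rfl fun t _ => ENNReal.toReal_mul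
  have hSr : ((∑ t, lam t ^ d * Measure.pi (μ t) E)).toReal = ∑ t, l t ^ d * a t := by
    rw [ENNReal.toReal_sum fun t _ =>
      ENNReal.mul_ne_top (ENNReal.pow_ne_top (hlamtop t)) (hmtop t)]
    exact Finset.sum_congr rfl fun t _ => by rw [ENNReal.toReal_mul, ENNReal.toReal_pow]
  rw [hPEr]
  calc (∑ t, l t * a t) ^ d / ((k:ℝ) - 1 + ∑ t, l t * a t) ^ (d - 1)
      ≤ ∑ t, l t ^ d * a t := by
        refine holder_scalar hd l a (fun t => ENNReal.toReal_nonneg) ?_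
          (fun t => ENNReal.toReal_nonneg) (fun t => ?_)
        · rw [hl, ← ENNReal.toReal_sum fun t _ => hlamtop t, hsum, ENNReal.toReal_one]
        · exact ENNReal.toReal_le_of_le_ofReal zero_le_one (by simpa using prob_le_one)
    _ ≤ ((Measure.pi (fun i => ∑ t, lam t • μ t i) : Measure (∀ i, W i)) E).toReal := by
        rw [← hSr]
        exact ENNReal.toReal_mono hνtop hdiag
end

section
/- For every d ≥ 2, k ≥ 2, and α ∈ (0,1], there exist a finite product space X = [k]^d, a probability distribution P on X that is a mixture of k product distributions, and a set E ⊆ X such that P(E) = α and P_□(E) = α^d / (k−1)^{d−1}, where P_□ is the product of the marginals of P. -/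
open MeasureTheory ENNReal

/-- Lower bound for mixtures: for every `d ≥ 2`, `k ≥ 2`, `α ∈ (0,1]` there is a
mixture `P` of `k` product distributions on `[k]^d` and a set `E` with
`P(E) = α` and `P_□(E) = α^d/(k−1)^{d−1}`, where `P_□` is the product of the
marginals of `P`. -/
theorem mixture_lower_bound (d k : ℕ) (hd : 2 ≤ d) (hk : 2 ≤ k)
    (α : ℝ) (hα : α ∈ Set.Ioc (0 : ℝ) 1) :
    ∃ (lam : Fin k → ℝ≥0∞) (μ : ∀ _t : Fin k, ∀ _i : Fin d, Measure (Fin k))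
      (E : Set (Fin d → Fin k)),
      (∑ t, lam t = 1) ∧ (∀ t i, IsProbabilityMeasure (μ t i)) ∧
      ((∑ t, lam t • Measure.pi (μ t) : Measure (Fin d → Fin k)) E
          = ENNReal.ofReal α) ∧
      ((Measure.pi (fun i => ∑ t, lam t • μ t i) : Measure (Fin d → Fin k)) E
          = ENNReal.ofReal (α ^ d / ((k : ℝ) - 1) ^ (d - 1))) := by
  obtain ⟨hα0, hα1⟩ := hα
  have hd0 : d ≠ 0 := by omega
  have hk1 : (0:ℝ) < (k:ℝ) - 1 := by
    have : (2:ℝ) ≤ k := by exact_mod_cast hk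
    linarith
  set L : Fin k := ⟨k - 1, by omega⟩ with hL
  set a : ℝ≥0∞ := ENNReal.ofReal (α / ((k:ℝ) - 1)) with ha
  set lam : Fin k → ℝ≥0∞ := fun t => if t = L then ENNReal.ofReal (1 - α) else a with hlam
  set μ : ∀ _t : Fin k, ∀ _i : Fin d, Measure (Fin k) :=
    fun t _i => Measure.dirac t with hμ
  clear_value lam μ
  set T : Finset (Fin k) := Finset.univ.erase L with hT
  have hTcard : T.card = k - 1 := by
    rw [hT, Finset.card_erase_of_mem (Finset.mem_univ _), Finset.card_univ, Fintype.card_fin]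
  set E : Set (Fin d → Fin k) := ⋃ t ∈ T, {Function.const (Fin d) t} with hE
  have hmeas_single : ∀ t : Fin k, MeasurableSet ({Function.const (Fin d) t} : Set (Fin d → Fin k)) :=
    fun t => MeasurableSet.singleton _
  have hdisj : (↑T : Set (Fin k)).PairwiseDisjoint
      (fun t => ({Function.const (Fin d) t} : Set (Fin d → Fin k))) := by
    intro s _ t _ hst
    simp only [Set.disjoint_singleton_left, Set.mem_singleton_iff]
    intro h
    exact hst (congrFun h ⟨0, by omega⟩)
  -- singleton as a product set
  have hsingle_pi : ∀ t : Fin k,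
      ({Function.const (Fin d) t} : Set (Fin d → Fin k)) = Set.pi Set.univ (fun _ => {t}) := by
    intro t
    ext x
    simp [funext_iff, Function.const, eq_comm]
  -- value of sum of scaled measures on a set
  have key : ∀ (ν : Fin k → Measure (Fin d → Fin k)) (s : Set (Fin d → Fin k)),
      (∑ t, lam t • ν t) s = ∑ t, lam t * ν t s := by
    intro ν s
    rw [Measure.finset_sum_apply]
    simp [Measure.smul_apply, smul_eq_mul]
  -- lam sums
  have hlamL : lam L = ENNReal.ofReal (1 - α) := by simp [hlam]
  have hlamT : ∀ t ∈ T, lam t = a := by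
    intro t ht
    have : t ≠ L := (Finset.mem_erase.mp ht).1
    simp [hlam, this]
  haveI hsf : ∀ (s : Fin k) (i : Fin d), SigmaFinite (μ s i) := by
    intro s i; simp only [hμ]; infer_instance
  refine ⟨lam, μ, E, ?_, ?_, ?_, ?_⟩
  · -- sum of lam = 1
    rw [← Finset.add_sum_erase _ _ (Finset.mem_univ L)]
    rw [Finset.sum_congr rfl hlamT, Finset.sum_const, hTcard, hlamL]
    rw [nsmul_eq_mul, ha]
    rw [← ENNReal.ofReal_natCast (k-1), ← ENNReal.ofReal_mul (by positivity)]
    rw [← ENNReal.ofReal_add (by linarith) (by positivity)]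
    have hcast : ((k - 1 : ℕ) : ℝ) = (k:ℝ) - 1 := by
      have : (1:ℕ) ≤ k := by omega
      push_cast [this]; ring
    rw [hcast]
    rw [mul_div_cancel₀ _ (ne_of_gt hk1)]
    norm_num
  · intro t i; simp only [hμ]; infer_instance
  · -- mixture measure of E
    have hEm : MeasurableSet E := by
      exact (T.measurableSet_biUnion (fun t _ => hmeas_single t))
    rw [hE, measure_biUnion_finset hdisj (fun t _ => hmeas_single t)]
    have hval : ∀ t ∈ T, (∑ s, lam s • Measure.pi (μ s)) {Function.const (Fin d) t}
        = a := by
      intro t ht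
      rw [key]
      have : ∀ s : Fin k, Measure.pi (μ s) ({Function.const (Fin d) t} : Set (Fin d → Fin k))
          = if s = t then 1 else 0 := by
        intro s
        rw [hsingle_pi, Measure.pi_pi]
        simp [hμ, Measure.dirac_apply']
        split <;> simp_all
      simp only [this, mul_ite, mul_one, mul_zero, Finset.sum_ite_eq', Finset.mem_univ, if_true]
      exact hlamT t ht
    rw [Finset.sum_congr rfl hval, Finset.sum_const, hTcard, nsmul_eq_mul, ha]
    rw [← ENNReal.ofReal_natCast (k-1), ← ENNReal.ofReal_mul (by positivity)]
    have hcast : ((k - 1 : ℕ) : ℝ) = (k:ℝ) - 1 := by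
      have : (1:ℕ) ≤ k := by omega
      push_cast [this]; ring
    rw [hcast, mul_div_cancel₀ _ (ne_of_gt hk1)]
  · -- product of marginals
    have hfin : ∀ i : Fin d, IsFiniteMeasure (∑ s, lam s • μ s i) := by
      intro i
      constructor
      rw [Measure.finset_sum_apply]
      simp only [Measure.smul_apply, smul_eq_mul, hμ, measure_univ, mul_one]
      refine (ENNReal.sum_lt_top.mpr ?_)
      intro s _
      simp only [hlam]
      split <;> exact ENNReal.ofReal_lt_top
    haveI : ∀ i : Fin d, SigmaFinite (∑ s, lam s • μ s i) := by
      intro i; haveI := hfin i; infer_instance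
    rw [hE, measure_biUnion_finset hdisj (fun t _ => hmeas_single t)]
    have hval : ∀ t ∈ T, (Measure.pi (fun i => ∑ s, lam s • μ s i)) {Function.const (Fin d) t}
        = a ^ d := by
      intro t ht
      rw [hsingle_pi, Measure.pi_pi]
      have : ∀ i : Fin d, (∑ s, lam s • μ s i) ({t} : Set (Fin k)) = lam t := by
        intro i
        rw [Measure.finset_sum_apply]
        simp only [Measure.smul_apply, smul_eq_mul, hμ, Measure.dirac_apply' _ (MeasurableSet.singleton t)]
        simp only [Set.indicator_apply, Set.mem_singleton_iff, Pi.one_apply, mul_ite,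
          mul_one, mul_zero, Finset.sum_ite_eq', Finset.mem_univ, if_true]
      rw [Finset.prod_congr rfl (fun i _ => this i), Finset.prod_const, Finset.card_univ,
        Fintype.card_fin, hlamT t ht]
    rw [Finset.sum_congr rfl hval, Finset.sum_const, hTcard, nsmul_eq_mul, ha]
    rw [← ENNReal.ofReal_pow (by positivity), ← ENNReal.ofReal_natCast (k-1),
      ← ENNReal.ofReal_mul (by positivity)]
    congr 1
    have hcast : ((k - 1 : ℕ) : ℝ) = (k:ℝ) - 1 := by
      have : (1:ℕ) ≤ k := by omega
      push_cast [this]; ring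
    have hne : ((k:ℝ)-1) ≠ 0 := ne_of_gt hk1
    have hpow : ((k:ℝ)-1)^d = ((k:ℝ)-1)^(d-1) * ((k:ℝ)-1) := by
      rw [← pow_succ]; congr 1; omega
    rw [hcast, div_pow, hpow]
    field_simp
end

section
/- Let P be a probability distribution on a product space X = W₁ × ⋯ × W_d with product of marginals P_□, and suppose the total correlation TC(P) := KL(P ‖ P_□) is at most C. Then for every measurable set E ⊆ X with P(E) = a > 0, one has P_□(E) ≥ exp(−(H(a) + C)/a), where H(a) = −a log a − (1−a) log(1−a) is the binary entropy. -/
open MeasureTheory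

open ProbabilityTheory Real in

/-- Data-processing step: the set-restricted integral of the log-likelihood ratio
is bounded below by `P(S) log (P(S)/Q(S))`, and moreover `Q(S) > 0`. -/
lemma key_llr_lb {α : Type*} [MeasurableSpace α] (P Q : Measure α)
    [IsProbabilityMeasure P] [IsProbabilityMeasure Q]
    (hac : P ≪ Q) (hint : Integrable (llr P Q) P)
    (S : Set α) (hPS : P S ≠ 0) :
    (P S).toReal * (Real.log (P S).toReal - Real.log (Q S).toReal)
      ≤ ∫ x in S, llr P Q x ∂P ∧ 0 < (Q S).toReal := by
  have hPSfin : P S ≠ ⊤ := (measure_lt_top P S).ne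
  have hpos : 0 < (P S).toReal := ENNReal.toReal_pos hPS hPSfin
  -- integrability of exp(-llr) on S
  have hexp_ae : (fun x ↦ Real.exp (- llr P Q x)) =ᵐ[P] fun x ↦ (Q.rnDeriv P x).toReal :=
    exp_neg_llr hac
  have hexp_int : IntegrableOn (fun x ↦ Real.exp (- llr P Q x)) S P :=
    (Measure.integrable_toReal_rnDeriv.congr hexp_ae.symm).integrableOn
  have hllr_int : IntegrableOn (fun x ↦ - llr P Q x) S P := (hint.neg).integrableOn
  -- Jensen
  have hJ : Real.exp (⨍ x in S, (- llr P Q x) ∂P) ≤ ⨍ x in S, Real.exp (- llr P Q x) ∂P := by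
    have := ConvexOn.map_set_average_le (μ := P) (t := S) (f := fun x ↦ - llr P Q x)
      convexOn_exp continuous_exp.continuousOn isClosed_univ hPS hPSfin
      (by simp) hllr_int hexp_int
    simpa using this
  have hintS : ∫ x in S, Real.exp (- llr P Q x) ∂P ≤ (Q S).toReal := by
    calc ∫ x in S, Real.exp (- llr P Q x) ∂P
        = ∫ x in S, (Q.rnDeriv P x).toReal ∂P :=
          integral_congr_ae (ae_restrict_of_ae hexp_ae)
      _ ≤ (Q S).toReal := Measure.setIntegral_toReal_rnDeriv_le (measure_lt_top Q S).ne
  set pS := (P S).toReal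
  set qS := (Q S).toReal
  have havg : ⨍ x in S, Real.exp (- llr P Q x) ∂P
      = pS⁻¹ * ∫ x in S, Real.exp (- llr P Q x) ∂P := by
    rw [setAverage_eq]; simp [pS, smul_eq_mul, measureReal_def]
  have hle : Real.exp (⨍ x in S, (- llr P Q x) ∂P) ≤ pS⁻¹ * qS := by
    refine hJ.trans ?_
    rw [havg]
    exact mul_le_mul_of_nonneg_left hintS (by positivity)
  have hq : 0 < qS := by
    by_contra h
    push_neg at h
    have : pS⁻¹ * qS ≤ 0 := mul_nonpos_of_nonneg_of_nonpos (by positivity) h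
    exact absurd (hle.trans this) (not_le.mpr (Real.exp_pos _))
  refine ⟨?_, hq⟩
  have hlog : ⨍ x in S, (- llr P Q x) ∂P ≤ Real.log (pS⁻¹ * qS) :=
    (Real.le_log_iff_exp_le (by positivity)).mpr hle
  rw [Real.log_mul (by positivity) hq.ne', Real.log_inv] at hlog
  have havg2 : ⨍ x in S, (- llr P Q x) ∂P = pS⁻¹ * ∫ x in S, (- llr P Q x) ∂P := by
    rw [setAverage_eq]; simp [pS, smul_eq_mul, measureReal_def]
  rw [havg2, integral_neg] at hlog
  have := (mul_le_mul_iff_right₀ hpos).mpr hlog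
  rw [← mul_assoc, mul_inv_cancel₀ hpos.ne', one_mul] at this
  nlinarith [this]

/-- The binary entropy function `H(a) = −a log a − (1−a) log(1−a)`. -/
noncomputable def binEnt (a : ℝ) : ℝ := -a * Real.log a - (1 - a) * Real.log (1 - a)

/-- Bounded total correlation implies box-continuity: if
`TC(P) = KL(P ‖ P_□) ≤ C`, then for every measurable `E` with `P(E) = a > 0`,
`P_□(E) ≥ exp(−(H(a)+C)/a)`. Here `P_□` is the product of the marginals of `P`
and the KL divergence is expressed as the integral of the log-likelihood
ratio. -/
theorem tc_box_continuity {d : ℕ} {W : Fin d → Type*} [∀ i, MeasurableSpace (W i)]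
    (P : Measure (∀ i, W i)) [IsProbabilityMeasure P] (C : ℝ) (hC : 0 ≤ C)
    (hac : P ≪ Measure.pi (fun i => P.map (fun x => x i)))
    (hint : Integrable (llr P (Measure.pi (fun i => P.map (fun x => x i)))) P)
    (hTC : ∫ x, llr P (Measure.pi (fun i => P.map (fun x => x i))) x ∂P ≤ C)
    (E : Set (∀ i, W i)) (hE : MeasurableSet E)
    (a : ℝ) (haP : (P E).toReal = a) (ha : 0 < a) :
    Real.exp (-(binEnt a + C) / a)
      ≤ ((Measure.pi (fun i => P.map (fun x => x i))) E).toReal := by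
  set Q : Measure (∀ i, W i) := Measure.pi (fun i => P.map (fun x => x i)) with hQ
  haveI : ∀ i, IsProbabilityMeasure (P.map (fun x => x i)) := fun i =>
    Measure.isProbabilityMeasure_map (measurable_pi_apply i).aemeasurable
  haveI : IsProbabilityMeasure Q := by rw [hQ]; infer_instance
  have hPE : P E ≠ 0 := by
    intro h; rw [h] at haP; simp at haP; exact absurd haP.symm ha.ne'
  obtain ⟨h1, hb⟩ := key_llr_lb P Q hac hint E hPE
  set b := (Q E).toReal with hbdef
  rw [haP] at h1
  have ha1 : a ≤ 1 := by
    rw [← haP]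
    exact ENNReal.toReal_le_of_le_ofReal zero_le_one (by simpa using prob_le_one)
  have hb1 : b ≤ 1 := ENNReal.toReal_le_of_le_ofReal zero_le_one (by simpa using prob_le_one)
  have hPc : (P Eᶜ).toReal = 1 - a := by
    rw [measure_compl hE (measure_ne_top P E), measure_univ,
      ENNReal.toReal_sub_of_le prob_le_one ENNReal.one_ne_top, haP, ENNReal.toReal_one]
  have hQc : (Q Eᶜ).toReal = 1 - b := by
    rw [measure_compl hE (measure_ne_top Q E), measure_univ,
      ENNReal.toReal_sub_of_le prob_le_one ENNReal.one_ne_top, ENNReal.toReal_one]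
  have h2 : (1 - a) * (Real.log (1 - a) - Real.log (1 - b)) ≤ ∫ x in Eᶜ, llr P Q x ∂P := by
    rcases eq_or_ne (P Eᶜ) 0 with h0 | h0
    · have : (1 : ℝ) - a = 0 := by rw [← hPc, h0]; simp
      rw [this, Measure.restrict_eq_zero.mpr h0]
      simp
    · have := (key_llr_lb P Q hac hint Eᶜ h0).1
      rwa [hPc, hQc] at this
  have hsplit : ∫ x in E, llr P Q x ∂P + ∫ x in Eᶜ, llr P Q x ∂P = ∫ x, llr P Q x ∂P :=
    integral_add_compl hE hint
  have hKL : a * (Real.log a - Real.log b)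
      + (1 - a) * (Real.log (1 - a) - Real.log (1 - b)) ≤ C := by
    calc _ ≤ ∫ x in E, llr P Q x ∂P + ∫ x in Eᶜ, llr P Q x ∂P := add_le_add h1 h2
      _ = ∫ x, llr P Q x ∂P := hsplit
      _ ≤ C := hTC
  have hlogb1 : Real.log (1 - b) ≤ 0 := Real.log_nonpos (by linarith) (by linarith)
  have hlogb : (-(binEnt a + C)) / a ≤ Real.log b := by
    rw [div_le_iff₀ ha, binEnt]
    nlinarith [hKL, mul_nonneg (by linarith : (0:ℝ) ≤ 1 - a) (neg_nonneg.mpr hlogb1)]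
  calc Real.exp (-(binEnt a + C) / a) ≤ Real.exp (Real.log b) := Real.exp_le_exp.mpr hlogb
    _ = b := Real.exp_log hb
end

section
/- Let F ⊆ 2^X be any family of subsets of a set X, and let F △ F = {A △ B : A, B ∈ F} be the family of pairwise symmetric differences. Then VC(F △ F) ≤ 20 · VC(F). -/
/-- A family of sets shatters a finite set `s`. -/
def Shatters {X : Type*} (𝓕 : Set (Set X)) (s : Finset X) : Prop :=
  ∀ t ⊆ s, ∃ f ∈ 𝓕, ∀ x ∈ s, x ∈ f ↔ x ∈ t

/- ### Numeric lemmas -/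

/-- Ratio bound for binomials below `n/20`. -/
lemma aux_choose_ratio {n v k : ℕ} (hjv : k + 1 ≤ v) (hn : 20 * v ≤ n) :
    19 * Nat.choose n k ≤ Nat.choose n (k + 1) := by
  have hkey := Nat.choose_succ_right_eq n k
  -- `choose n (k+1) * (k+1) = choose n k * (n - k)`
  have hnk : 19 * (k + 1) ≤ n - k := by omega
  have h1 : 19 * Nat.choose n k * (k + 1) ≤ Nat.choose n (k + 1) * (k + 1) := by
    rw [hkey]
    calc 19 * Nat.choose n k * (k + 1) = Nat.choose n k * (19 * (k + 1)) := by ring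
      _ ≤ Nat.choose n k * (n - k) := Nat.mul_le_mul_left _ hnk
  exact Nat.le_of_mul_le_mul_right h1 (Nat.succ_pos k)

/-- Sum of small binomials bound. -/
lemma aux_sum_choose {n v : ℕ} (hn : 20 * v ≤ n) :
    ∑ i ∈ Finset.range (v + 1), Nat.choose n i ≤ 2 * Nat.choose n v := by
  induction v with
  | zero => simp
  | succ w ih =>
      have hw : 20 * w ≤ n := by omega
      have h19 : 19 * Nat.choose n w ≤ Nat.choose n (w + 1) :=
        aux_choose_ratio le_rfl hn
      have := ih hw
      rw [Finset.sum_range_succ]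
      omega

/-- `(v+1)^v ≤ 3 * v^v`. -/
lemma aux_succ_pow {v : ℕ} : (v + 1) ^ v ≤ 3 * v ^ v := by
  rcases Nat.eq_zero_or_pos v with rfl | hv
  · simp
  have hvR : (0:ℝ) < v := by exact_mod_cast hv
  have key : ((v:ℝ) + 1) ^ v ≤ 3 * (v:ℝ) ^ v := by
    have h1 : (v:ℝ) + 1 = v * (1 + 1 / v) := by field_simp
    have h2 : (1 + 1 / (v:ℝ)) ≤ Real.exp (1 / v) := by
      have := Real.add_one_le_exp (1 / (v:ℝ)); linarith
    have h3 : (1 + 1 / (v:ℝ)) ^ v ≤ Real.exp (1 / v) ^ v := by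
      apply pow_le_pow_left₀ (by positivity) h2
    have h4 : Real.exp (1 / (v:ℝ)) ^ v = Real.exp 1 := by
      rw [← Real.exp_nat_mul]
      congr 1
      field_simp
    have h5 : Real.exp 1 ≤ 3 := by
      have := Real.exp_one_lt_d9; linarith
    calc ((v:ℝ) + 1) ^ v = (v:ℝ) ^ v * (1 + 1 / v) ^ v := by
          rw [h1, mul_pow]
      _ ≤ (v:ℝ) ^ v * 3 := by
          apply mul_le_mul_of_nonneg_left _ (by positivity)
          calc (1 + 1 / (v:ℝ)) ^ v ≤ Real.exp (1 / v) ^ v := h3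
            _ = Real.exp 1 := h4
            _ ≤ 3 := h5
      _ = 3 * (v:ℝ) ^ v := by ring
  exact_mod_cast (by push_cast; exact key : (((v:ℕ) + 1 : ℕ) ^ v : ℝ) ≤ 3 * ((v:ℕ) ^ v : ℝ))

/-- `v^v ≤ 3^v * v!`. -/
lemma aux_pow_le_factorial (v : ℕ) : v ^ v ≤ 3 ^ v * Nat.factorial v := by
  induction v with
  | zero => simp
  | succ w ih =>
      calc (w + 1) ^ (w + 1) = (w + 1) * (w + 1) ^ w := by ring
        _ ≤ (w + 1) * (3 * w ^ w) := Nat.mul_le_mul_left _ aux_succ_pow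
        _ ≤ (w + 1) * (3 * (3 ^ w * Nat.factorial w)) := by
            exact Nat.mul_le_mul_left _ (Nat.mul_le_mul_left _ ih)
        _ = 3 ^ (w + 1) * ((w + 1) * Nat.factorial w) := by ring
        _ = 3 ^ (w + 1) * Nat.factorial (w + 1) := by rw [Nat.factorial_succ]

/-- Base case of the numeric estimate. -/
lemma aux_base {v : ℕ} (hv : 1 ≤ v) :
    4 * Nat.choose (20 * v + 1) v ^ 2 < 2 ^ (20 * v + 1) := by
  set n := 20 * v + 1 with hn
  have hC : Nat.choose n v ≤ 63 ^ v := by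
    have h1 : Nat.choose n v * (v ^ v) ≤ 63 ^ v * v ^ v := by
      calc Nat.choose n v * v ^ v ≤ Nat.choose n v * (3 ^ v * Nat.factorial v) :=
            Nat.mul_le_mul_left _ (aux_pow_le_factorial v)
        _ = 3 ^ v * (Nat.factorial v * Nat.choose n v) := by ring
        _ = 3 ^ v * n.descFactorial v := by rw [Nat.descFactorial_eq_factorial_mul_choose]
        _ ≤ 3 ^ v * n ^ v := Nat.mul_le_mul_left _ (Nat.descFactorial_le_pow _ _)
        _ ≤ 3 ^ v * (21 * v) ^ v := by
            apply Nat.mul_le_mul_left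
            apply Nat.pow_le_pow_left
            omega
        _ = 63 ^ v * v ^ v := by rw [mul_pow, ← mul_assoc, ← mul_pow]; norm_num
    have hvpos : 0 < v ^ v := Nat.pow_pos (by omega)
    exact Nat.le_of_mul_le_mul_right h1 hvpos
  calc 4 * Nat.choose n v ^ 2 ≤ 4 * (63 ^ v) ^ 2 := by
        apply Nat.mul_le_mul_left
        exact Nat.pow_le_pow_left hC 2
    _ = 4 * 3969 ^ v := by rw [← pow_mul, mul_comm v 2, pow_mul]; norm_num
    _ ≤ 4 * 4096 ^ v := Nat.mul_le_mul_left _ (Nat.pow_le_pow_left (by norm_num) v)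
    _ = 2 ^ (12 * v + 2) := by
        rw [pow_add, pow_mul]
        norm_num [mul_comm]
    _ < 2 ^ (20 * v + 1) := Nat.pow_lt_pow_right (by norm_num) (by omega)

/-- Main numeric estimate: `4 C(n,v)² < 2^n` for `n ≥ 20v+1`, `v ≥ 1`. -/
lemma aux_main {v n : ℕ} (hv : 1 ≤ v) (hn : 20 * v + 1 ≤ n) :
    4 * Nat.choose n v ^ 2 < 2 ^ n := by
  obtain ⟨w, rfl⟩ : ∃ w, v = w + 1 := ⟨v - 1, by omega⟩
  induction n, hn using Nat.le_induction with
  | base => exact aux_base hv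
  | succ n hn ih =>
      have hsplit : Nat.choose (n + 1) (w + 1) = Nat.choose n w + Nat.choose n (w + 1) :=
        Nat.choose_succ_succ' n w
      have h19 : 19 * Nat.choose n w ≤ Nat.choose n (w + 1) :=
        aux_choose_ratio le_rfl (by omega)
      have h20 : 19 * Nat.choose (n + 1) (w + 1) ≤ 20 * Nat.choose n (w + 1) := by omega
      have hsq : 361 * Nat.choose (n + 1) (w + 1) ^ 2 ≤ 400 * Nat.choose n (w + 1) ^ 2 := by
        nlinarith [Nat.mul_le_mul h20 h20]
      have hp : 2 ^ (n + 1) = 2 ^ n * 2 := pow_succ 2 n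
      omega

/-- VC dimension of the symmetric-difference class:
`VC(𝓕 △ 𝓕) ≤ 20 · VC(𝓕)`, phrased as: if every set shattered by `𝓕` has size
at most `v`, then every set shattered by `{A △ B : A,B ∈ 𝓕}` has size at most
`20·v`. -/
theorem vc_symmDiff_le {X : Type*} (𝓕 : Set (Set X)) (v : ℕ)
    (hv : ∀ s : Finset X, Shatters 𝓕 s → s.card ≤ v) :
    ∀ s : Finset X,
      Shatters {H : Set X | ∃ A ∈ 𝓕, ∃ B ∈ 𝓕, H = symmDiff A B} s →
      s.card ≤ 20 * v := by
  classical
  intro s hs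
  by_contra hcard
  push_neg at hcard
  set n := s.card with hn
  have hn1 : 20 * v + 1 ≤ n := hcard
  -- the trace family of 𝓕 on s
  set T : Finset (Finset X) :=
    s.powerset.filter (fun t => ∃ f ∈ 𝓕, ∀ x ∈ s, x ∈ f ↔ x ∈ t) with hT
  -- every set shattered (in the Finset sense) by T has card ≤ v
  have hTsh : ∀ u : Finset X, T.Shatters u → u.card ≤ v := by
    intro u hu
    apply hv
    intro t ht
    obtain ⟨w, hwT, hw⟩ := hu ht
    rw [hT, Finset.mem_filter] at hwT
    obtain ⟨hwpow, f, hf, hfw⟩ := hwT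
    have husub : u ⊆ s := by
      obtain ⟨w', hw'T, hw'⟩ := hu (Finset.Subset.refl u)
      have : u ⊆ w' := by
        intro x hx; rw [← hw'] at hx; exact (Finset.mem_inter.1 hx).2
      exact this.trans (Finset.mem_powerset.1 ((Finset.mem_filter.1 hw'T).1))
    refine ⟨f, hf, fun x hx => ?_⟩
    have hxs : x ∈ s := husub hx
    rw [hfw x hxs]
    constructor
    · intro hxw; rw [← hw]; exact Finset.mem_inter.2 ⟨hx, hxw⟩
    · intro hxt; rw [← hw] at hxt; exact (Finset.mem_inter.1 hxt).2
  -- Sauer–Shelah: card T ≤ ∑_{i ≤ v} C(n, i)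
  have hTcard : T.card ≤ ∑ i ∈ Finset.range (v + 1), Nat.choose n i := by
    calc T.card ≤ T.shatterer.card := Finset.card_le_card_shatterer T
      _ ≤ ((Finset.range (v + 1)).biUnion (fun i => Finset.powersetCard i s)).card := by
          apply Finset.card_le_card
          intro u hu
          rw [Finset.mem_shatterer] at hu
          have hucard : u.card ≤ v := hTsh u hu
          have husub : u ⊆ s := by
            obtain ⟨w', hw'T, hw'⟩ := hu (Finset.Subset.refl u)
            have : u ⊆ w' := by
              intro x hx; rw [← hw'] at hx; exact (Finset.mem_inter.1 hx).2
            exact this.trans (Finset.mem_powerset.1 ((Finset.mem_filter.1 hw'T).1))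
          rw [Finset.mem_biUnion]
          exact ⟨u.card, Finset.mem_range.2 (by omega),
            (Finset.mem_powersetCard).2 ⟨husub, rfl⟩⟩
      _ ≤ ∑ i ∈ Finset.range (v + 1), (Finset.powersetCard i s).card :=
          Finset.card_biUnion_le
      _ = ∑ i ∈ Finset.range (v + 1), Nat.choose n i := by
          apply Finset.sum_congr rfl
          intro i _
          rw [Finset.card_powersetCard]
  -- shattering by symmetric differences: 2^n ≤ (card T)^2
  have hsurj : Set.SurjOn (fun p : Finset X × Finset X => symmDiff p.1 p.2)
      ↑(T ×ˢ T) ↑s.powerset := by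
    intro t ht
    rw [Finset.mem_coe, Finset.mem_powerset] at ht
    obtain ⟨H, hH, hHt⟩ := hs t ht
    obtain ⟨A, hA, B, hB, rfl⟩ := hH
    refine ⟨(s.filter (· ∈ A), s.filter (· ∈ B)), ?_, ?_⟩
    · rw [Finset.mem_coe, Finset.mem_product]
      constructor
      · rw [hT, Finset.mem_filter]
        exact ⟨Finset.mem_powerset.2 (Finset.filter_subset _ _),
          A, hA, fun x hx => by simp [Finset.mem_filter, hx, Iff.comm]⟩
      · rw [hT, Finset.mem_filter]
        exact ⟨Finset.mem_powerset.2 (Finset.filter_subset _ _),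
          B, hB, fun x hx => by simp [Finset.mem_filter, hx, Iff.comm]⟩
    · ext x
      simp only [Finset.mem_symmDiff, Finset.mem_filter]
      constructor
      · rintro (⟨⟨hxs, hxA⟩, hnB⟩ | ⟨⟨hxs, hxB⟩, hnA⟩)
        · have hxB : x ∉ B := fun h => hnB ⟨hxs, h⟩
          exact (hHt x hxs).1 (Set.mem_symmDiff.2 (Or.inl ⟨hxA, hxB⟩))
        · have hxA : x ∉ A := fun h => hnA ⟨hxs, h⟩
          exact (hHt x hxs).1 (Set.mem_symmDiff.2 (Or.inr ⟨hxB, hxA⟩))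
      · intro hxt
        have hxs : x ∈ s := ht hxt
        have := (hHt x hxs).2 hxt
        rcases Set.mem_symmDiff.1 this with ⟨hxA, hxB⟩ | ⟨hxB, hxA⟩
        · exact Or.inl ⟨⟨hxs, hxA⟩, fun h => hxB h.2⟩
        · exact Or.inr ⟨⟨hxs, hxB⟩, fun h => hxA h.2⟩
  have hpow : 2 ^ n ≤ T.card * T.card := by
    calc 2 ^ n = s.powerset.card := (Finset.card_powerset s).symm
      _ ≤ (T ×ˢ T).card := Finset.card_le_card_of_surjOn _ hsurj
      _ = T.card * T.card := Finset.card_product T T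
  -- combine
  rcases Nat.eq_zero_or_pos v with rfl | hv1
  · simp only [Nat.zero_add, Finset.range_one, Finset.sum_singleton, Nat.choose_zero_right]
      at hTcard
    have : 2 ^ n ≤ 1 := le_trans hpow (by nlinarith)
    have : 2 ^ 1 ≤ 2 ^ n := Nat.pow_le_pow_right (by norm_num) (by omega)
    omega
  · have hS : ∑ i ∈ Finset.range (v + 1), Nat.choose n i ≤ 2 * Nat.choose n v :=
      aux_sum_choose (by omega)
    have h4 : 2 ^ n ≤ 4 * Nat.choose n v ^ 2 := by
      calc 2 ^ n ≤ T.card * T.card := hpow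
        _ ≤ (2 * Nat.choose n v) * (2 * Nat.choose n v) :=
            Nat.mul_le_mul (hTcard.trans hS) (hTcard.trans hS)
        _ = 4 * Nat.choose n v ^ 2 := by ring
    exact absurd (aux_main hv1 hn1) (by omega)
end

section
/- Let P be the uniform distribution on [n] × [n] with n ≥ 4, and let S = ((I₁,J₁),…,(I_m,J_m)) be m i.i.d. samples from P with m ≤ (1/2)√n. Then with probability at least 3/4, there exists a permutation π* ∈ S_n such that every sample point lies in F_{π*} = {(i, π*(i))}, and hence the empirical measure satisfies P̂_emp(F_{π*}) = 1 while P(F_{π*}) = 1/n; in particular sup_{π} |P̂_emp(F_π) − P(F_π)| ≥ 3/4 with probability at least 3/4. -/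
open MeasureTheory ENNReal

-- numeric lemma
lemma desc_lb (n : ℕ) : ∀ m, m ≤ n → 2 * n^m ≤ 2 * n.descFactorial m + m * m * n^(m-1) := by
  intro m
  induction m with
  | zero => simp
  | succ k ih =>
    intro h
    have hk : k ≤ n := Nat.le_of_succ_le h
    have IH := ih hk
    have hD : n.descFactorial k ≤ n^k := Nat.descFactorial_le_pow n k
    have hsub : 2*(n-k)*n.descFactorial k + 2*k*n.descFactorial k = 2*n*n.descFactorial k := by
      have : n - k + k = n := Nat.sub_add_cancel hk
      nlinarith [Nat.sub_add_cancel hk]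
    have hpow : k*k*(n*n^(k-1)) ≤ k*k*n^k := by
      cases k with
      | zero => simp
      | succ j => simp [pow_succ]; ring_nf; omega
    have step1 : 2*n^(k+1) ≤ 2*n*n.descFactorial k + k*k*n^k := by
      calc 2*n^(k+1) = n * (2*n^k) := by ring
        _ ≤ n * (2 * n.descFactorial k + k*k*n^(k-1)) := Nat.mul_le_mul_left n IH
        _ = 2*n*n.descFactorial k + k*k*(n*n^(k-1)) := by ring
        _ ≤ 2*n*n.descFactorial k + k*k*n^k := by omega
    have : 2 * n.descFactorial (k+1) = 2*(n-k)*n.descFactorial k := by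
      rw [Nat.descFactorial_succ]; ring
    rw [this]
    have h2 : 2*k*n.descFactorial k ≤ 2*k*n^k := Nat.mul_le_mul_left _ hD
    simp only [Nat.add_sub_cancel]
    nlinarith [step1, hsub, h2]

lemma desc_sq (n m : ℕ) (hm : 1 ≤ m) (h : 4*(m*m) ≤ n) :
    48 * n^(2*m) ≤ 64 * (n.descFactorial m)^2 := by
  have hmn : m ≤ n := le_trans (by nlinarith) h
  have h1 := desc_lb n m hmn
  have hpow : n * n^(m-1) = n^m := by
    cases m with
    | zero => omega
    | succ j => simp [pow_succ, mul_comm]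
  have h2 : 8*(m*m)*n^(m-1) ≤ 2*n^m := by
    calc 8*(m*m)*n^(m-1) = 2*(4*(m*m))*n^(m-1) := by ring
      _ ≤ 2*n*n^(m-1) := by
          have := Nat.mul_le_mul_right (n^(m-1)) (Nat.mul_le_mul_left 2 h)
          linarith
      _ = 2*n^m := by rw [mul_assoc, hpow]
  have h3 : 7 * n^m ≤ 8 * n.descFactorial m := by nlinarith [h1, h2]
  have h4 : (7*n^m)*(7*n^m) ≤ (8 * n.descFactorial m)*(8 * n.descFactorial m) :=
    Nat.mul_le_mul h3 h3
  have : n^(2*m) = n^m * n^m := by rw [two_mul, pow_add]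
  nlinarith [h4]

lemma pi_count_eq (n m : ℕ) (hn : n ≠ 0) :
    (Measure.pi fun _ : Fin m =>
        ((n : ℝ≥0∞) ^ 2)⁻¹ • (Measure.count : Measure (Fin n × Fin n))) =
      ((((n : ℝ≥0∞) ^ 2)⁻¹)^m) • (Measure.count : Measure (Fin m → Fin n × Fin n)) := by
  haveI : IsFiniteMeasure
      (((n : ℝ≥0∞) ^ 2)⁻¹ • (Measure.count : Measure (Fin n × Fin n))) := by
    constructor
    rw [Measure.smul_apply, smul_eq_mul,
      Measure.count_apply_finite Set.univ Set.finite_univ]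
    exact ENNReal.mul_lt_top
      (ENNReal.inv_lt_top.mpr (by positivity)) (by exact ENNReal.natCast_lt_top _)
  apply MeasureTheory.Measure.ext_of_singleton
  intro f
  trans ((((n : ℝ≥0∞) ^ 2)⁻¹)^m)
  · rw [← Set.univ_pi_singleton, Measure.pi_pi]
    simp [Measure.count_singleton]
  · simp [Measure.count_singleton]

lemma graph_count (n : ℕ) (π : Equiv.Perm (Fin n)) :
    (Measure.count : Measure (Fin n × Fin n)) {p | p.2 = π p.1} = n := by
  have hset : {p : Fin n × Fin n | p.2 = π p.1} =
      ↑(Finset.univ.image fun i : Fin n => (i, π i)) := by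
    ext ⟨a, b⟩
    simp only [Set.mem_setOf_eq, Finset.coe_image, Finset.coe_univ, Set.image_univ,
      Set.mem_range, Prod.mk.injEq]
    constructor
    · intro h; exact ⟨a, rfl, h.symm⟩
    · rintro ⟨i, rfl, rfl⟩; rfl
  rw [hset, Measure.count_apply_finset, Finset.card_image_of_injective _ (by
    intro a b hab; exact (Prod.ext_iff.mp hab).1), Finset.card_univ, Fintype.card_fin]

noncomputable def eD (n m : ℕ) :
    {S : Fin m → Fin n × Fin n //
        Function.Injective (fun t => (S t).1) ∧ Function.Injective (fun t => (S t).2)} ≃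
      ((Fin m ↪ Fin n) × (Fin m ↪ Fin n)) where
  toFun S := (⟨fun t => (S.1 t).1, S.2.1⟩, ⟨fun t => (S.1 t).2, S.2.2⟩)
  invFun fg := ⟨fun t => (fg.1 t, fg.2 t), fg.1.injective, fg.2.injective⟩
  left_inv S := by ext t <;> rfl
  right_inv fg := by ext t <;> rfl

lemma count_D (n m : ℕ) :
    (Measure.count : Measure (Fin m → Fin n × Fin n))
      {S | Function.Injective (fun t => (S t).1) ∧ Function.Injective (fun t => (S t).2)}
      = (((n.descFactorial m)^2 : ℕ) : ℝ≥0∞) := by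
  classical
  rw [Measure.count_apply_finite _ (Set.toFinite _)]
  congr 1
  rw [Set.Finite.card_toFinset]
  have := Fintype.card_congr (eD n m)
  simp only [Fintype.card_prod, Fintype.card_embedding_eq, Fintype.card_fin] at this
  rw [pow_two, ← this]
  exact Fintype.card_congr (Equiv.subtypeEquivRight fun S => Iff.rfl)

lemma exists_perm (n m : ℕ) (S : Fin m → Fin n × Fin n)
    (h1 : Function.Injective fun t => (S t).1)
    (h2 : Function.Injective fun t => (S t).2) :
    ∃ π : Equiv.Perm (Fin n), ∀ t, (S t).2 = π (S t).1 := by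
  classical
  set f1 : Fin m → Fin n := fun t => (S t).1 with hf1
  set f2 : Fin m → Fin n := fun t => (S t).2 with hf2
  let e : {x // x ∈ Set.range f1} ≃ {x // x ∈ Set.range f2} :=
    (Equiv.ofInjective f1 h1).symm.trans (Equiv.ofInjective f2 h2)
  refine ⟨e.extendSubtype, fun t => ?_⟩
  have hx : (S t).1 ∈ Set.range f1 := ⟨t, rfl⟩
  rw [Equiv.extendSubtype_apply_of_mem e _ hx]
  have h3 : (⟨(S t).1, hx⟩ : {x // x ∈ Set.range f1}) = Equiv.ofInjective f1 h1 t :=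
    Subtype.ext rfl
  show (S t).2 = ↑(e ⟨(S t).1, hx⟩)
  rw [h3]
  simp [e]
  rfl


/-- Failure of the empirical estimator for permutation graphs. Let `P` be
uniform on `[n] × [n]` (`n ≥ 4`) and draw `m ≤ √n/2` i.i.d. samples. Then
`P(F_π) = 1/n` for every permutation graph `F_π`, and with probability at
least `3/4` there is a permutation `π*` whose graph contains every sample
point, so that the empirical measure of `F_{π*}` equals `1` and
`sup_π |P̂(F_π) − P(F_π)| ≥ 3/4`. -/
theorem empirical_fails_on_permutation_graphs (n m : ℕ) (hn : 4 ≤ n)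
    (hm : 1 ≤ m) (hmn : (m : ℝ) ≤ Real.sqrt n / 2) :
    (∀ π : Equiv.Perm (Fin n),
      (((n : ℝ≥0∞) ^ 2)⁻¹ • (Measure.count : Measure (Fin n × Fin n)))
          {p | p.2 = π p.1} = (n : ℝ≥0∞)⁻¹) ∧
    (3/4 : ℝ≥0∞) ≤
      (Measure.pi fun _ : Fin m =>
          ((n : ℝ≥0∞) ^ 2)⁻¹ • (Measure.count : Measure (Fin n × Fin n)))
        {S | ∃ π : Equiv.Perm (Fin n),
          (∀ t, (S t).2 = π (S t).1) ∧
          ((Finset.univ.filter fun t => (S t).2 = π (S t).1).card : ℝ) / m = 1 ∧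
          3/4 ≤ |((Finset.univ.filter fun t => (S t).2 = π (S t).1).card : ℝ) / m
                  - 1 / n|} := by
  have hn0 : (n : ℝ≥0∞) ≠ 0 := by
    simp only [ne_eq, Nat.cast_eq_zero]; omega
  have hnt : (n : ℝ≥0∞) ≠ ⊤ := ENNReal.natCast_ne_top n
  constructor
  · intro π
    rw [Measure.smul_apply, smul_eq_mul, graph_count, pow_two,
      ENNReal.mul_inv (Or.inl hn0) (Or.inl hnt), mul_assoc,
      ENNReal.inv_mul_cancel hn0 hnt, mul_one]
  · -- key numeric fact
    have hnat : 4 * (m * m) ≤ n := by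
      have hs : (2 * m : ℝ) ≤ Real.sqrt n := by linarith
      have hsq : (2 * m : ℝ) * (2 * m) ≤ Real.sqrt n * Real.sqrt n :=
        mul_le_mul hs hs (by positivity) (Real.sqrt_nonneg n)
      rw [Real.mul_self_sqrt (by positivity)] at hsq
      have hr : ((4 * (m * m) : ℕ) : ℝ) ≤ (n : ℝ) := by push_cast; linarith
      exact_mod_cast hr
    -- inclusion of events
    have hsub : {S : Fin m → Fin n × Fin n |
        Function.Injective (fun t => (S t).1) ∧ Function.Injective (fun t => (S t).2)} ⊆
        {S : Fin m → Fin n × Fin n | ∃ π : Equiv.Perm (Fin n),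
          (∀ t, (S t).2 = π (S t).1) ∧
          ((Finset.univ.filter fun t => (S t).2 = π (S t).1).card : ℝ) / m = 1 ∧
          3/4 ≤ |((Finset.univ.filter fun t => (S t).2 = π (S t).1).card : ℝ) / m
                  - 1 / n|} := by
      rintro S ⟨h1, h2⟩
      obtain ⟨π, hπ⟩ := exists_perm n m S h1 h2
      have hfilter : (Finset.univ.filter fun t => (S t).2 = π (S t).1) = Finset.univ :=
        Finset.filter_true_of_mem fun t _ => hπ t
      have hcard : ((Finset.univ.filter fun t => (S t).2 = π (S t).1).card : ℝ) / m = 1 := by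
        rw [hfilter, Finset.card_univ, Fintype.card_fin]
        exact div_self (by exact_mod_cast Nat.one_le_iff_ne_zero.mp hm)
      refine ⟨π, hπ, hcard, ?_⟩
      rw [hcard]
      have hinv : (1 : ℝ) / n ≤ 1 / 4 :=
        one_div_le_one_div_of_le (by norm_num) (by exact_mod_cast hn)
      have hpos : (0 : ℝ) < (n : ℝ) := by positivity
      rw [abs_of_nonneg (by
        have : (1 : ℝ) / n ≤ 1 := by linarith
        linarith)]
      linarith
    refine le_trans ?_ (measure_mono hsub)
    rw [pi_count_eq n m (by omega), Measure.smul_apply, smul_eq_mul, count_D,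
      ← ENNReal.inv_pow, ← pow_mul]
    set N : ℝ≥0∞ := (n : ℝ≥0∞) ^ (2 * m) with hN
    have hNnat : N = ((n ^ (2 * m) : ℕ) : ℝ≥0∞) := by push_cast [hN]; ring
    have hN0 : N ≠ 0 := by
      rw [hNnat]; simp only [ne_eq, Nat.cast_eq_zero]
      positivity
    have hNt : N ≠ ⊤ := by rw [hNnat]; exact ENNReal.natCast_ne_top _
    rw [← ENNReal.div_eq_inv_mul,
      ENNReal.le_div_iff_mul_le (Or.inl hN0) (Or.inl hNt),
      div_eq_mul_inv, mul_right_comm, ← div_eq_mul_inv,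
      ENNReal.div_le_iff_le_mul (Or.inl (by norm_num)) (Or.inl (by norm_num)),
      hNnat]
    have h3 : 3 * n ^ (2 * m) ≤ n.descFactorial m ^ 2 * 4 := by
      linarith [desc_sq n m hm hnat]
    exact_mod_cast h3
end

section
/- Fix d ≥ 2 and n ≥ 1, let N = [n]^d, and let F denote the family of all (d−1)-dimensional permutations of [n]^d (subsets intersecting every axis-parallel line in exactly one point). For g ≥ 1 let G = {⋃_{i=1}^r F_i : 0 ≤ r ≤ g, F_i ∈ F}. Then the linear VC dimension of G equals g, and |G| ≥ |F|^g / g^{g·n^{d−1}}. -/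
/-- The section of a family along the axis-parallel line through `x` in
direction `i`. -/
def LineSections {ι : Type*} [DecidableEq ι] {W : ι → Type*}
    (𝓕 : Set (Set (∀ j, W j))) (i : ι) (x : ∀ j, W j) : Set (Set (W i)) :=
  {A | ∃ f ∈ 𝓕, A = {y | Function.update x i y ∈ f}}

/-- The family of `(d−1)`-dimensional permutations of `[n]^d`: subsets meeting
every axis-parallel line in exactly one point. -/
def HighDimPerms (d n : ℕ) : Set (Set (Fin d → Fin n)) :=
  {F | ∀ (i : Fin d) (x : Fin d → Fin n), ∃! y : Fin n, Function.update x i y ∈ F}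

/-- Unions of at most `g` high-dimensional permutations. -/
def UnionsOfPerms (d n g : ℕ) : Set (Set (Fin d → Fin n)) :=
  {U | ∃ r : ℕ, r ≤ g ∧ ∃ Fs : Fin r → Set (Fin d → Fin n),
    (∀ j, Fs j ∈ HighDimPerms d n) ∧ U = ⋃ j, Fs j}
open Function

lemma fin_cast_inj {n : ℕ} (hn : n ≠ 0) : Function.Injective (fun y : Fin n => ((y : ℕ) : ZMod n)) := by
  haveI : NeZero n := ⟨hn⟩
  intro a b hab
  have := congrArg ZMod.val hab
  simpa [ZMod.val_cast_of_lt a.is_lt, ZMod.val_cast_of_lt b.is_lt, Fin.ext_iff] using this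

lemma diag_perm (d n : ℕ) (hn : n ≠ 0) (c : ZMod n) :
    {x : Fin d → Fin n | ∑ i, ((x i : ℕ) : ZMod n) = c} ∈ HighDimPerms d n := by
  haveI : NeZero n := ⟨hn⟩
  intro i x
  have key : ∀ y : Fin n, (∑ j, (((Function.update x i y) j : ℕ) : ZMod n))
      = (y : ℕ) + ∑ j ∈ Finset.univ.erase i, ((x j : ℕ) : ZMod n) := by
    intro y
    rw [← Finset.add_sum_erase _ _ (Finset.mem_univ i)]
    congr 1
    · simp
    · exact Finset.sum_congr rfl (fun j hj => by
        rw [Function.update_of_ne (Finset.ne_of_mem_erase hj)])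
  set S := ∑ j ∈ Finset.univ.erase i, ((x j : ℕ) : ZMod n) with hS
  refine ⟨⟨(c - S).val, ZMod.val_lt _⟩, ?_, ?_⟩
  · show _ ∈ {x : Fin d → Fin n | _}
    simp only [Set.mem_setOf_eq, key]
    simp [ZMod.natCast_val, ZMod.cast_id]
  · intro y hy
    simp only [Set.mem_setOf_eq, key] at hy
    apply fin_cast_inj hn
    simp only
    rw [eq_comm, ← sub_eq_iff_eq_add] at hy
    rw [← hy]
    simp [ZMod.natCast_val, ZMod.cast_id]
lemma perm_through (d n : ℕ) (hn : n ≠ 0) (p : Fin d → Fin n) :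
    ∃ F ∈ HighDimPerms d n, p ∈ F := by
  refine ⟨_, diag_perm d n hn (∑ i, ((p i : ℕ) : ZMod n)), rfl⟩

lemma line_card {d n g : ℕ} {U : Set (Fin d → Fin n)} (hU : U ∈ UnionsOfPerms d n g)
    (i : Fin d) (x : Fin d → Fin n) :
    {y : Fin n | Function.update x i y ∈ U}.ncard ≤ g := by
  classical
  obtain ⟨r, hr, Fs, hFs, rfl⟩ := hU
  set A := {y : Fin n | Function.update x i y ∈ ⋃ j, Fs j} with hA
  rcases A.eq_empty_or_nonempty with h | ⟨y0, hy0⟩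
  · simp [h]
  · haveI : Nonempty (Fin r) := by
      have : ∃ j : Fin r, Function.update x i y0 ∈ Fs j := by
        simpa [hA, Set.mem_iUnion] using hy0
      exact ⟨this.choose⟩
    have hchoice : ∀ y : Fin n, y ∈ A → ∃ j : Fin r, Function.update x i y ∈ Fs j := by
      intro y hy; simpa [hA, Set.mem_iUnion] using hy
    choose f hf using hchoice
    have hle : A.ncard ≤ (Set.univ : Set (Fin r)).ncard := by
      apply Set.ncard_le_ncard_of_injOn
        (fun y => if h : y ∈ A then f y h else Classical.arbitrary _)
      · intro a _; trivial
      · intro a ha b hb hab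
        simp only [dif_pos ha, dif_pos hb] at hab
        obtain ⟨y, hy1, hy2⟩ := hFs (f a ha) i x
        have hb' : Function.update x i b ∈ Fs (f a ha) := by rw [hab]; exact hf b hb
        rw [hy2 a (hf a ha), hy2 b hb']
      -- finiteness handled automatically?
    rw [Set.ncard_univ] at hle
    simpa using hle.trans (by simpa using hr)
lemma card_perms_subset {d n g : ℕ} (hd : 2 ≤ d) (hn : n ≠ 0)
    {U : Set (Fin d → Fin n)} (hU : U ∈ UnionsOfPerms d n g) :
    {F | F ∈ HighDimPerms d n ∧ F ⊆ U}.ncard ≤ g ^ (n ^ (d - 1)) := by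
  classical
  set i0 : Fin d := ⟨0, by omega⟩ with hi0
  set z : Fin n := ⟨0, by omega⟩ with hz
  set I := {v : Fin d → Fin n // v i0 = z} with hI
  -- the injection
  have hcard : Nat.card {F // F ∈ HighDimPerms d n ∧ F ⊆ U}
      ≤ Nat.card (∀ v : I, {y : Fin n // Function.update v.1 i0 y ∈ U}) := by
    have hex : ∀ (F : {F // F ∈ HighDimPerms d n ∧ F ⊆ U}) (v : I),
        ∃! y : Fin n, Function.update v.1 i0 y ∈ F.1 := fun F v => F.2.1 i0 v.1
    choose Φ hΦ hΦu using fun F v => hex F v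
    apply Nat.card_le_card_of_injective
      (fun F => fun v => (⟨Φ F v, F.2.2 (hΦ F v)⟩ : {y : Fin n // Function.update v.1 i0 y ∈ U}))
    intro F F' h
    have key : ∀ (A B : {F // F ∈ HighDimPerms d n ∧ F ⊆ U}),
        ((fun v => (⟨Φ A v, A.2.2 (hΦ A v)⟩ : {y : Fin n // Function.update v.1 i0 y ∈ U})) =
         (fun v => ⟨Φ B v, B.2.2 (hΦ B v)⟩)) → A.1 ⊆ B.1 := by
      intro A B hAB p hp
      set v : I := ⟨Function.update p i0 z, by simp⟩ with hv
      have h1 : Function.update v.1 i0 (p i0) ∈ A.1 := by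
        rw [hv]; simpa [Function.update_idem] using hp
      have h2 : Φ A v = p i0 := (hΦu A v _ h1).symm
      have h3 : Φ B v = p i0 := by
        have := congrFun hAB v
        have := congrArg Subtype.val this
        simp only at this
        rw [← this, h2]
      have := hΦ B v
      rw [h3, hv] at this
      simpa [Function.update_idem] using this
    apply Subtype.ext
    exact Set.Subset.antisymm (key F F' h) (key F' F h.symm)
  -- compute/bound the card of the Pi type
  have hfin : Nat.card (∀ v : I, {y : Fin n // Function.update v.1 i0 y ∈ U})
      ≤ g ^ (n ^ (d - 1)) := by
    rw [Nat.card_eq_fintype_card, Fintype.card_pi]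
    have hfac : ∀ v : I, Fintype.card {y : Fin n // Function.update v.1 i0 y ∈ U} ≤ g := by
      intro v
      have := line_card hU i0 v.1
      rwa [← Nat.card_coe_set_eq, Nat.card_eq_fintype_card] at this
    calc ∏ v : I, Fintype.card {y : Fin n // Function.update v.1 i0 y ∈ U}
        ≤ ∏ _v : I, g := Finset.prod_le_prod' (fun v _ => hfac v)
      _ = g ^ Fintype.card I := by rw [Finset.prod_const, Finset.card_univ]
      _ = g ^ (n ^ (d - 1)) := by
          congr 1
          have e : I ≃ ({j : Fin d // j ≠ i0} → Fin n) :=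
            { toFun := fun v j => v.1 j.1
              invFun := fun f => ⟨fun j => if h : j = i0 then z else f ⟨j, h⟩, by simp⟩
              left_inv := by
                intro v; apply Subtype.ext; funext j
                by_cases h : j = i0 <;> simp [h, v.2.symm] <;> subst h <;> exact v.2.symm
              right_inv := by intro f; funext j; simp [j.2] }
          rw [Fintype.card_congr e, Fintype.card_fun, Fintype.card_fin,
            Fintype.card_subtype_compl, Fintype.card_subtype_eq, Fintype.card_fin]
  rw [← Nat.card_coe_set_eq]
  exact le_trans hcard hfin
lemma main_count (d n g : ℕ) (hd : 2 ≤ d) (hg : 1 ≤ g) (hgn : g ≤ n) :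
    (HighDimPerms d n).ncard ^ g
      ≤ g ^ (g * n ^ (d - 1)) * (UnionsOfPerms d n g).ncard := by
  classical
  have hn : n ≠ 0 := by omega
  set Ffin := (Set.toFinite (HighDimPerms d n)).toFinset with hF
  set Gfin := (Set.toFinite (UnionsOfPerms d n g)).toFinset with hG
  set D := Fintype.piFinset (fun _ : Fin g => Ffin) with hD
  set u : (Fin g → Set (Fin d → Fin n)) → Set (Fin d → Fin n) := fun t => ⋃ j, t j with hu
  have hmaps : ∀ t ∈ D, u t ∈ UnionsOfPerms d n g := by
    intro t ht
    exact ⟨g, le_refl g, t, fun j => by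
      have := Fintype.mem_piFinset.mp ht j
      rwa [Set.Finite.mem_toFinset] at this, rfl⟩
  have himg : D.image u ⊆ Gfin := by
    intro a ha
    obtain ⟨t, ht, rfl⟩ := Finset.mem_image.mp ha
    rw [Set.Finite.mem_toFinset]
    exact hmaps t ht
  have hfiber : ∀ a ∈ D.image u,
      (D.filter fun t => u t = a).card ≤ g ^ (g * n ^ (d - 1)) := by
    intro a ha
    obtain ⟨t0, ht0, rfl⟩ := Finset.mem_image.mp ha
    have haU : u t0 ∈ UnionsOfPerms d n g := hmaps t0 ht0
    set Pfin := Ffin.filter (fun F => F ⊆ u t0) with hP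
    have hsub : (D.filter fun t => u t = u t0) ⊆ Fintype.piFinset (fun _ : Fin g => Pfin) := by
      intro t ht
      rw [Finset.mem_filter] at ht
      rw [Fintype.mem_piFinset]
      intro j
      rw [hP, Finset.mem_filter]
      refine ⟨Fintype.mem_piFinset.mp ht.1 j, ?_⟩
      rw [← ht.2]
      exact Set.subset_iUnion t j
    have hPcard : Pfin.card ≤ g ^ (n ^ (d - 1)) := by
      have heq : Pfin = (Set.toFinite {F | F ∈ HighDimPerms d n ∧ F ⊆ u t0}).toFinset := by
        ext F
        simp only [hP, Finset.mem_filter, Set.Finite.mem_toFinset, hF, Set.mem_setOf_eq]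
      rw [heq, ← Set.ncard_eq_toFinset_card _ (Set.toFinite _)]
      exact card_perms_subset hd hn haU
    calc (D.filter fun t => u t = u t0).card
        ≤ (Fintype.piFinset (fun _ : Fin g => Pfin)).card := Finset.card_le_card hsub
      _ = Pfin.card ^ g := by rw [Fintype.card_piFinset]; simp
      _ ≤ (g ^ (n ^ (d - 1))) ^ g := Nat.pow_le_pow_left hPcard g
      _ = g ^ (g * n ^ (d - 1)) := by rw [← pow_mul, Nat.mul_comm]
  have hmain := Finset.card_le_mul_card_image (f := u) D (g ^ (g * n ^ (d - 1))) hfiber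
  have hDcard : D.card = (HighDimPerms d n).ncard ^ g := by
    rw [hD, Fintype.card_piFinset, Finset.prod_const, Finset.card_univ, Fintype.card_fin]
    congr 1
    rw [hF, ← Set.ncard_eq_toFinset_card _ (Set.toFinite _)]
  have hGcard : Gfin.card = (UnionsOfPerms d n g).ncard := by
    rw [hG, ← Set.ncard_eq_toFinset_card _ (Set.toFinite _)]
  calc (HighDimPerms d n).ncard ^ g = D.card := hDcard.symm
    _ ≤ g ^ (g * n ^ (d - 1)) * (D.image u).card := hmain
    _ ≤ g ^ (g * n ^ (d - 1)) * Gfin.card :=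
        Nat.mul_le_mul_left _ (Finset.card_le_card himg)
    _ = g ^ (g * n ^ (d - 1)) * (UnionsOfPerms d n g).ncard := by rw [hGcard]

/-- Lower bound for the grid SSP rate: the class `𝓖` of unions of at most `g`
`(d−1)`-dimensional permutations of `[n]^d` has linear VC dimension exactly
`g`, and `|𝓖| ≥ |𝓕|^g / g^{g·n^{d−1}}` where `𝓕` is the family of
`(d−1)`-dimensional permutations. -/
theorem grid_ssp_lower (d n g : ℕ) (hd : 2 ≤ d) (hg : 1 ≤ g) (hgn : g ≤ n) :
    (∀ (i : Fin d) (x : Fin d → Fin n) (s : Finset (Fin n)),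
      Shatters (LineSections (UnionsOfPerms d n g) i x) s → s.card ≤ g) ∧
    (∃ (i : Fin d) (x : Fin d → Fin n) (s : Finset (Fin n)),
      Shatters (LineSections (UnionsOfPerms d n g) i x) s ∧ s.card = g) ∧
    ((HighDimPerms d n).ncard : ℝ) ^ g / (g : ℝ) ^ (g * n ^ (d - 1))
      ≤ ((UnionsOfPerms d n g).ncard : ℝ) := by
  classical
  have hn : n ≠ 0 := by omega
  refine ⟨?_, ?_, ?_⟩
  · -- upper bound on shattered sets
    intro i x s hs
    obtain ⟨f, hf, hfs⟩ := hs s (subset_refl s)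
    obtain ⟨U, hU, rfl⟩ := hf
    have hsub : (↑s : Set (Fin n)) ⊆ {y | Function.update x i y ∈ U} :=
      fun y hy => (hfs y hy).mpr hy
    calc s.card = (↑s : Set (Fin n)).ncard := (Set.ncard_coe_finset s).symm
      _ ≤ {y | Function.update x i y ∈ U}.ncard :=
          Set.ncard_le_ncard hsub (Set.toFinite _)
      _ ≤ g := line_card hU i x
  · -- a shattered set of size g
    refine ⟨⟨0, by omega⟩, fun _ => ⟨0, by omega⟩,
      Finset.univ.image (Fin.castLE hgn), ?_, ?_⟩
    · intro t ht
      set i0 : Fin d := ⟨0, by omega⟩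
      set x : Fin d → Fin n := fun _ => ⟨0, by omega⟩
      set e := t.equivFin.symm
      have hex : ∀ j : Fin t.card, ∃ F ∈ HighDimPerms d n,
          Function.update x i0 ((e j : Fin n)) ∈ F :=
        fun j => perm_through d n hn _
      choose Fs hFs hFmem using hex
      have hcard : t.card ≤ g := by
        calc t.card ≤ (Finset.univ.image (Fin.castLE hgn)).card := Finset.card_le_card ht
          _ = g := by
              rw [Finset.card_image_of_injective _ (Fin.castLE_injective hgn)]
              simp
      have hUmem : (⋃ j, Fs j) ∈ UnionsOfPerms d n g := ⟨t.card, hcard, Fs, hFs, rfl⟩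
      refine ⟨{y | Function.update x i0 y ∈ ⋃ j, Fs j}, ⟨_, hUmem, rfl⟩, ?_⟩
      intro y _
      simp only [Set.mem_setOf_eq, Set.mem_iUnion]
      constructor
      · rintro ⟨j, hj⟩
        obtain ⟨z, hz1, hz2⟩ := hFs j i0 x
        have h1 := hz2 y hj
        have h2 := hz2 _ (hFmem j)
        rw [h1, ← h2]
        exact (e j).2
      · intro hy
        refine ⟨e.symm ⟨y, hy⟩, ?_⟩
        have := hFmem (e.symm ⟨y, hy⟩)
        simpa using this
    · rw [Finset.card_image_of_injective _ (Fin.castLE_injective hgn)]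
      simp
  · -- counting
    have hmain := main_count d n g hd hg hgn
    have hpos : (0:ℝ) < (g : ℝ) ^ (g * n ^ (d - 1)) :=
      pow_pos (by exact_mod_cast hg) _
    rw [div_le_iff₀ hpos]
    calc ((HighDimPerms d n).ncard : ℝ) ^ g
        = (((HighDimPerms d n).ncard ^ g : ℕ) : ℝ) := by push_cast; ring
      _ ≤ ((g ^ (g * n ^ (d - 1)) * (UnionsOfPerms d n g).ncard : ℕ) : ℝ) := by
          exact_mod_cast hmain
      _ = ((UnionsOfPerms d n g).ncard : ℝ) * (g : ℝ) ^ (g * n ^ (d - 1)) := by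
          push_cast; ring
end
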